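/- Fix a burn-in time T ≥ 2. Let w₀, v₁, v₂, … be i.i.d. positive real-valued random variables, let u₁, u₂, … be arbitrary random variables with values in [0,1], and define the forward-coupled Metropolis weight chains W and W̃ from them. Let N be any ℕ-valued random variable with P(N ≥ i) > 0 for all i ≥ 1, and define the burn-in forward coupled estimator S := 1/W_T + Σ_{i=1}^N (1/W_{T+i} − 1/W̃_{T+i−1})/P(N ≥ i). Then P(S > 0) ≥ 1 − 2/(T+1). -/

import Mathlib

open MeasureTheory
open scoped ENNReal

/-- The Metropolis weight update: from current weight `w`, proposed weight `w'`, and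
uniform draw `u`, accept the proposal iff `u ≤ min 1 (w'/w)`. -/
noncomputable def metroF (w w' u : ℝ) : ℝ := if u ≤ min 1 (w' / w) then w' else w

/-- The forward Metropolis weight chain: `W 0 = w0`, `W (i+1) = f (W i) (v (i+1)) (u (i+1))`. -/
noncomputable def fwdChain (w0 : ℝ) (v u : ℕ → ℝ) : ℕ → ℝ
  | 0 => w0
  | i + 1 => metroF (fwdChain w0 v u i) (v (i + 1)) (u (i + 1))

/-- The forward-coupled tilde chain: it skips the first proposal, so
`W̃ 0 = w0`, `W̃ (i+1) = f (W̃ i) (v (i+2)) (u (i+2))`; it shares each pair `(v j, u j)`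
with the main chain whenever it processes proposal `j`. -/
noncomputable def fwdChainT (w0 : ℝ) (v u : ℕ → ℝ) : ℕ → ℝ
  | 0 => w0
  | i + 1 => metroF (fwdChainT w0 v u i) (v (i + 2)) (u (i + 2))

lemma fwdChain_mem (v u : ℕ → ℝ) (i : ℕ) : ∃ k ≤ i, fwdChain (v 0) v u i = v k := by
  induction i with
  | zero => exact ⟨0, le_refl _, rfl⟩
  | succ i ih =>
    obtain ⟨k, hk, hEq⟩ := ih
    by_cases h : u (i+1) ≤ min 1 (v (i+1) / fwdChain (v 0) v u i)
    · exact ⟨i+1, le_refl _, by simp [fwdChain, metroF, h]⟩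
    · refine ⟨k, hk.trans (Nat.le_succ i), ?_⟩
      show metroF (fwdChain (v 0) v u i) (v (i+1)) (u (i+1)) = v k
      rw [metroF, if_neg h, hEq]

lemma fwdChainT_mem (v u : ℕ → ℝ) (i : ℕ) : ∃ k ≤ i + 1, fwdChainT (v 0) v u i = v k := by
  induction i with
  | zero => exact ⟨0, by omega, rfl⟩
  | succ i ih =>
    obtain ⟨k, hk, hEq⟩ := ih
    by_cases h : u (i+2) ≤ min 1 (v (i+2) / fwdChainT (v 0) v u i)
    · exact ⟨i+2, le_refl _, by simp [fwdChainT, metroF, h]⟩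
    · refine ⟨k, by omega, ?_⟩
      show metroF (fwdChainT (v 0) v u i) (v (i+2)) (u (i+2)) = v k
      rw [metroF, if_neg h, hEq]

lemma fwdChain_pos (w0 : ℝ) (v u : ℕ → ℝ) (hw0 : 0 < w0) (hv : ∀ k, 0 < v k) :
    ∀ i, 0 < fwdChain w0 v u i := by
  intro i
  induction i with
  | zero => exact hw0
  | succ i ih =>
    show 0 < metroF (fwdChain w0 v u i) (v (i+1)) (u (i+1))
    rw [metroF]
    split <;> [exact hv _; exact ih]

lemma metroF_accept {w w' uu : ℝ} (hw : 0 < w) (hle : w ≤ w') (hu : uu ≤ 1) :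
    metroF w w' uu = w' := by
  have : min 1 (w' / w) = 1 := min_eq_left (by rwa [le_div_iff₀ hw, one_mul])
  simp [metroF, this, hu]

lemma couple_persist (v u : ℕ → ℝ) (a : ℕ)
    (h : fwdChain (v 0) v u (a+1) = fwdChainT (v 0) v u a) :
    ∀ b, a ≤ b → fwdChain (v 0) v u (b+1) = fwdChainT (v 0) v u b := by
  intro b hb
  induction b, hb using Nat.le_induction with
  | base => exact h
  | succ b hb ih =>
    show fwdChain (v 0) v u (b+2) = fwdChainT (v 0) v u (b+1)
    have : fwdChain (v 0) v u (b+2) = metroF (fwdChain (v 0) v u (b+1)) (v (b+2)) (u (b+2)) := rfl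
    rw [this, ih]; rfl

lemma couple_main (v u : ℕ → ℝ) (hv : ∀ k, 0 < v k) (hu : ∀ k, u k ≤ 1)
    (T j : ℕ) (hj2 : 2 ≤ j) (hjT : j ≤ T) (hmax : ∀ k ≤ T, v k ≤ v j) :
    ∀ i, 1 ≤ i → fwdChain (v 0) v u (T+i) = fwdChainT (v 0) v u (T+i-1) := by
  obtain ⟨m, rfl⟩ : ∃ m, j = m + 2 := ⟨j - 2, by omega⟩
  have h1 : fwdChain (v 0) v u (m+1) ≤ v (m+2) := by
    obtain ⟨k, hk, hEq⟩ := fwdChain_mem v u (m+1)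
    rw [hEq]; exact hmax k (by omega)
  have h2 : fwdChainT (v 0) v u m ≤ v (m+2) := by
    obtain ⟨k, hk, hEq⟩ := fwdChainT_mem v u m
    rw [hEq]; exact hmax k (by omega)
  have hWpos : 0 < fwdChain (v 0) v u (m+1) := fwdChain_pos _ v u (hv 0) hv _
  have hWTpos : 0 < fwdChainT (v 0) v u m := by
    obtain ⟨k, hk, hEq⟩ := fwdChainT_mem v u m; rw [hEq]; exact hv k
  have hcouple : fwdChain (v 0) v u (m+2) = fwdChainT (v 0) v u (m+1) := by
    have hL : fwdChain (v 0) v u (m+2)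
        = metroF (fwdChain (v 0) v u (m+1)) (v (m+2)) (u (m+2)) := rfl
    have hR : fwdChainT (v 0) v u (m+1)
        = metroF (fwdChainT (v 0) v u m) (v (m+2)) (u (m+2)) := rfl
    rw [hL, hR, metroF_accept hWpos h1 (hu _), metroF_accept hWTpos h2 (hu _)]
  intro i hi
  have := couple_persist v u (m+1) hcouple (T+i-1) (by omega)
  have hidx : T + i - 1 + 1 = T + i := by omega
  rwa [hidx] at this

lemma exch {Ω : Type*} [MeasurableSpace Ω] (μ : Measure Ω) [IsProbabilityMeasure μ]
    (v : ℕ → Ω → ℝ) (hvmeas : ∀ k, Measurable (v k))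
    (hindep : ProbabilityTheory.iIndepFun v μ)
    (hident : ∀ k, ProbabilityTheory.IdentDistrib (v k) (v 0) μ μ)
    (n : ℕ) (hn : 0 < n) (e : Fin n → ℕ) (he : Function.Injective e) :
    μ.map (fun ω (k : Fin n) => v (e k) ω) =
      Measure.pi (fun _ : Fin n => μ.map (v 0)) := by
  haveI : IsProbabilityMeasure (μ.map (v 0)) :=
    Measure.isProbabilityMeasure_map (hvmeas 0).aemeasurable
  haveI : Nonempty (Fin n) := ⟨⟨0, hn⟩⟩
  symm
  apply Measure.pi_eq
  intro s hs
  have hΦ : Measurable (fun ω (k : Fin n) => v (e k) ω) :=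
    measurable_pi_lambda _ fun k => hvmeas (e k)
  rw [Measure.map_apply hΦ (MeasurableSet.univ_pi hs)]
  set g : ℕ → Set ℝ := fun j => s (Function.invFun e j) with hg
  have hge : ∀ k, g (e k) = s k := fun k => by
    rw [hg]; simp [Function.leftInverse_invFun he k]
  have hpre : (fun ω (k : Fin n) => v (e k) ω) ⁻¹' Set.univ.pi s
      = ⋂ j ∈ Finset.image e Finset.univ, v j ⁻¹' g j := by
    ext ω
    simp only [Set.mem_preimage, Set.mem_pi, Set.mem_univ, forall_true_left,
      Set.mem_iInter, Finset.mem_image, Finset.mem_univ, true_and]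
    constructor
    · rintro h j ⟨k, rfl⟩; rw [hge]; exact h k
    · intro h k; rw [← hge k]; exact h (e k) ⟨k, rfl⟩
  rw [hpre, hindep.measure_inter_preimage_eq_mul (Finset.image e Finset.univ)
    (sets := g) (fun j hj => by
      obtain ⟨k, -, rfl⟩ := Finset.mem_image.mp hj
      rw [hge]; exact hs k)]
  rw [Finset.prod_image (fun a _ b _ h => he h)]
  refine Finset.prod_congr rfl fun k _ => ?_
  rw [hge, ← Measure.map_apply (hvmeas (e k)) (hs k), (hident (e k)).map_eq]

/-- **Positivity of the burn-in forward coupled estimator.** With i.i.d. positive weights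
`w0 = v 0, v 1, v 2, …`, arbitrary `[0,1]`-valued `u`'s, a burn-in time `T ≥ 2`, and any
`ℕ`-valued `N` with `P(N ≥ i) > 0` for all `i ≥ 1`, the burn-in forward coupled estimator
`S = 1/W T + ∑_{i=1}^{N} (1/W (T+i) - 1/W̃ (T+i-1)) / P(N ≥ i)` is strictly positive
with probability at least `1 - 2/(T+1)`. -/
theorem burnin_fce_positive_probability
    {Ω : Type*} [MeasurableSpace Ω] (μ : Measure Ω) [IsProbabilityMeasure μ]
    (T : ℕ) (hT : 2 ≤ T) (v u : ℕ → Ω → ℝ)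
    (hvmeas : ∀ k, Measurable (v k)) (humeas : ∀ k, Measurable (u k))
    (hvpos : ∀ k ω, 0 < v k ω) (hu : ∀ k ω, u k ω ∈ Set.Icc (0 : ℝ) 1)
    (hindep : ProbabilityTheory.iIndepFun v μ)
    (hident : ∀ k, ProbabilityTheory.IdentDistrib (v k) (v 0) μ μ)
    (N : Ω → ℕ) (hNmeas : Measurable N)
    (hNpos : ∀ i : ℕ, 1 ≤ i → 0 < μ {ω | i ≤ N ω}) :
    1 - 2 / ((T : ℝ) + 1) ≤
      (μ {ω | 0 < 1 / fwdChain (v 0 ω) (fun k => v k ω) (fun k => u k ω) T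
        + ∑ i ∈ Finset.Icc 1 (N ω),
          (1 / fwdChain (v 0 ω) (fun k => v k ω) (fun k => u k ω) (T + i)
            - 1 / fwdChainT (v 0 ω) (fun k => v k ω) (fun k => u k ω) (T + i - 1))
            / (μ {ω' | i ≤ N ω'}).toReal}).toReal := by
  classical
  set Sset := {ω | 0 < 1 / fwdChain (v 0 ω) (fun k => v k ω) (fun k => u k ω) T
        + ∑ i ∈ Finset.Icc 1 (N ω),
          (1 / fwdChain (v 0 ω) (fun k => v k ω) (fun k => u k ω) (T + i)
            - 1 / fwdChainT (v 0 ω) (fun k => v k ω) (fun k => u k ω) (T + i - 1))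
            / (μ {ω' | i ≤ N ω'}).toReal} with hSset
  -- basic `Fin (T+1)` facts
  have hval1 : ((1 : Fin (T+1)) : ℕ) = 1 := by
    rw [Fin.val_one']; exact Nat.mod_eq_of_lt (by omega)
  have hfin2 : ∀ k : Fin (T+1), k ≠ 0 → k ≠ 1 → 2 ≤ (k : ℕ) := by
    intro k h0 h1
    have a0 : (k:ℕ) ≠ 0 := fun hh => h0 (Fin.ext (by rw [hh, Fin.val_zero]))
    have a1 : (k:ℕ) ≠ 1 := fun hh => h1 (Fin.ext (by rw [hh, hval1]))
    omega
  have htwo : ∀ c : Fin (T+1), ¬(c = 1 + (1 + c)) := by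
    intro c h
    have h' : (1+1 : Fin (T+1)) + c = 0 + c := by
      rw [zero_add, add_assoc]; exact h.symm
    have h2 : (1+1 : Fin (T+1)) = 0 := add_right_cancel h'
    have h3 : ((1+1 : Fin (T+1)) : ℕ) = 0 := by rw [h2, Fin.val_zero]
    rw [Fin.val_add, hval1, Nat.mod_eq_of_lt (by omega)] at h3
    omega
  -- the shifted tuple maps and events
  set L := μ.map (v 0) with hL
  set P := Measure.pi (fun _ : Fin (T+1) => L) with hP
  set Φ : Fin (T+1) → Ω → (Fin (T+1) → ℝ) :=
    fun c ω k => v ((k + c : Fin (T+1)) : ℕ) ω with hΦdef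
  have hΦmeas : ∀ c, Measurable (Φ c) :=
    fun c => measurable_pi_lambda _ fun k => hvmeas _
  have hΦmap : ∀ c, μ.map (Φ c) = P := by
    intro c
    refine exch μ v hvmeas hindep hident (T+1) (by omega)
      (fun k => ((k + c : Fin (T+1)) : ℕ)) ?_
    intro a b hab
    exact add_right_cancel (Fin.val_injective hab)
  set A0 : Set (Fin (T+1) → ℝ) :=
    {x | x 1 ≤ x 0} ∩ ⋂ k : Fin (T+1), {x | 2 ≤ (k:ℕ) → x k < x 0} with hA0def
  set A1 : Set (Fin (T+1) → ℝ) :=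
    ⋂ k : Fin (T+1), {x : Fin (T+1) → ℝ | 1 ≤ (k:ℕ) → x k < x 0} with hA1def
  have hA0meas : MeasurableSet A0 := by
    refine (measurableSet_le (measurable_pi_apply 1) (measurable_pi_apply 0)).inter
      (MeasurableSet.iInter fun k => ?_)
    by_cases h : 2 ≤ (k:ℕ)
    · simp only [h, forall_true_left]
      exact measurableSet_lt (measurable_pi_apply k) (measurable_pi_apply 0)
    · simp only [h]; simp
  have hA1meas : MeasurableSet A1 := by
    refine MeasurableSet.iInter fun k => ?_
    by_cases h : 1 ≤ (k:ℕ)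
    · simp only [h, forall_true_left]
      exact measurableSet_lt (measurable_pi_apply k) (measurable_pi_apply 0)
    · simp only [h]; simp
  set H0 : Fin (T+1) → Set Ω := fun c => Φ c ⁻¹' A0 with hH0def
  set H1 : Fin (T+1) → Set Ω := fun c => Φ c ⁻¹' A1 with hH1def
  have hH0meas : ∀ c, MeasurableSet (H0 c) := fun c => hΦmeas c hA0meas
  have hH1meas : ∀ c, MeasurableSet (H1 c) := fun c => hΦmeas c hA1meas
  have hH0val : ∀ c, μ (H0 c) = P A0 := fun c => by
    rw [hH0def]; rw [← Measure.map_apply (hΦmeas c) hA0meas, hΦmap c]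
  have hH1val : ∀ c, μ (H1 c) = P A1 := fun c => by
    rw [hH1def]; rw [← Measure.map_apply (hΦmeas c) hA1meas, hΦmap c]
  -- membership unfolding
  have hmemH0 : ∀ c ω, ω ∈ H0 c ↔
      (v ((1 + c : Fin (T+1)) : ℕ) ω ≤ v ((c : Fin (T+1)) : ℕ) ω ∧
        ∀ k : Fin (T+1), 2 ≤ (k:ℕ) → v ((k + c : Fin (T+1)) : ℕ) ω < v ((c : Fin (T+1)) : ℕ) ω) := by
    intro c ω
    simp only [hH0def, hA0def, Set.mem_preimage, Set.mem_inter_iff, Set.mem_setOf_eq,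
      Set.mem_iInter, hΦdef, zero_add]
  have hmemH1 : ∀ c ω, ω ∈ H1 c ↔
      (∀ k : Fin (T+1), 1 ≤ (k:ℕ) → v ((k + c : Fin (T+1)) : ℕ) ω < v ((c : Fin (T+1)) : ℕ) ω) := by
    intro c ω
    simp only [hH1def, hA1def, Set.mem_preimage, Set.mem_iInter, Set.mem_setOf_eq, hΦdef, zero_add]
  -- key consequences of membership
  have key0 : ∀ (c : Fin (T+1)) ω, ω ∈ H0 c → ∀ m : Fin (T+1), m ≠ c → m ≠ 1 + c →
      v (m : ℕ) ω < v (c : ℕ) ω := by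
    intro c ω hω m hmc hm1c
    obtain ⟨-, h2⟩ := (hmemH0 c ω).mp hω
    have hk : (m - c) + c = m := sub_add_cancel m c
    have hk0 : m - c ≠ 0 := fun h => hmc (by rw [← hk, h, zero_add])
    have hk1 : m - c ≠ 1 := fun h => hm1c (by rw [← hk, h])
    have := h2 (m - c) (hfin2 _ hk0 hk1)
    rwa [hk] at this
  have key1 : ∀ (c : Fin (T+1)) ω, ω ∈ H1 c → ∀ m : Fin (T+1), m ≠ c →
      v (m : ℕ) ω < v (c : ℕ) ω := by
    intro c ω hω m hmc
    have h2 := (hmemH1 c ω).mp hω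
    have hk : (m - c) + c = m := sub_add_cancel m c
    have hk0 : m - c ≠ 0 := fun h => hmc (by rw [← hk, h, zero_add])
    have hk0' : 1 ≤ ((m - c : Fin (T+1)) : ℕ) := by
      have : ((m - c : Fin (T+1)) : ℕ) ≠ 0 := fun hh => hk0 (Fin.ext (by rw [hh, Fin.val_zero]))
      omega
    have := h2 (m - c) hk0'
    rwa [hk] at this
  -- pairwise disjointness
  have hdisj0 : Pairwise (Function.onFun Disjoint H0) := by
    intro c c' hcc'
    rw [Function.onFun, Set.disjoint_left]
    intro ω hc hc'
    by_cases hA : c' = 1 + c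
    · by_cases hB : c = 1 + c'
      · rw [hA] at hB; exact htwo c hB
      · have h1 : v (c' : ℕ) ω ≤ v (c : ℕ) ω := by
          have := ((hmemH0 c ω).mp hc).1; rwa [← hA] at this
        have h2 : v (c : ℕ) ω < v (c' : ℕ) ω := key0 c' ω hc' c hcc' hB
        linarith
    · by_cases hB : c = 1 + c'
      · have h1 : v (c : ℕ) ω ≤ v (c' : ℕ) ω := by
          have := ((hmemH0 c' ω).mp hc').1; rwa [← hB] at this
        have h2 : v (c' : ℕ) ω < v (c : ℕ) ω := key0 c ω hc c' hcc'.symm hA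
        linarith
      · exact lt_asymm (key0 c ω hc c' hcc'.symm hA) (key0 c' ω hc' c hcc' hB)
  have hdisj1 : Pairwise (Function.onFun Disjoint H1) := by
    intro c c' hcc'
    rw [Function.onFun, Set.disjoint_left]
    intro ω hc hc'
    exact lt_asymm (key1 c ω hc c' hcc'.symm) (key1 c' ω hc' c hcc')
  -- measure bounds : P A0, P A1 ≤ (T+1)⁻¹
  have hbound : ∀ (H : Fin (T+1) → Set Ω) (A : Set (Fin (T+1) → ℝ)),
      (∀ c, MeasurableSet (H c)) → Pairwise (Function.onFun Disjoint H) →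
      (∀ c, μ (H c) = P A) → P A ≤ (((T:ℕ)+1 : ℕ) : ℝ≥0∞)⁻¹ := by
    intro H A hmeas hdisj hval
    have hsum : ∑ c : Fin (T+1), μ (H c) ≤ 1 := by
      rw [← tsum_fintype (L := .unconditional _), ← measure_iUnion hdisj hmeas]
      exact prob_le_one
    rw [Finset.sum_congr rfl (fun c _ => hval c), Finset.sum_const, Finset.card_univ,
      Fintype.card_fin, nsmul_eq_mul] at hsum
    rw [ENNReal.le_inv_iff_mul_le]
    rwa [mul_comm]
  have hPA0 : P A0 ≤ (((T:ℕ)+1 : ℕ) : ℝ≥0∞)⁻¹ := hbound H0 A0 hH0meas hdisj0 hH0val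
  have hPA1 : P A1 ≤ (((T:ℕ)+1 : ℕ) : ℝ≥0∞)⁻¹ := hbound H1 A1 hH1meas hdisj1 hH1val
  -- the escape event is contained in Sset
  have hsub : (H0 0 ∪ H1 1)ᶜ ⊆ Sset := by
    intro ω hc
    rw [Set.mem_compl_iff, Set.mem_union] at hc
    push_neg at hc
    obtain ⟨hc0, hc1⟩ := hc
    -- first, find a record index in [2, T]
    have hrec : ∃ j, 2 ≤ j ∧ j ≤ T ∧ max (v 0 ω) (v 1 ω) ≤ v j ω := by
      by_contra h
      push_neg at h
      by_cases h01 : v 1 ω ≤ v 0 ω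
      · apply hc0
        rw [hmemH0]
        constructor
        · rw [add_zero, hval1, Fin.val_zero]; exact h01
        · intro k hk
          rw [add_zero, Fin.val_zero]
          have hkT : (k:ℕ) ≤ T := by omega
          have := h (k:ℕ) hk hkT
          rw [max_eq_left h01] at this
          exact this
      · push_neg at h01
        apply hc1
        rw [hmemH1]
        intro k hk
        rw [hval1]
        by_cases hm1 : ((k + 1 : Fin (T+1)) : ℕ) = 1
        · exfalso
          have hme : (k + 1 : Fin (T+1)) = 1 := Fin.ext (by rw [hm1, hval1])
          have hk0 : k = 0 := by
            have h' : k + 1 = 0 + 1 := by rw [hme, zero_add]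
            exact add_right_cancel h'
          rw [hk0] at hk; simp at hk
        · by_cases hm0 : ((k + 1 : Fin (T+1)) : ℕ) = 0
          · rw [hm0]; exact h01
          · have hlt : ((k + 1 : Fin (T+1)) : ℕ) < T + 1 := (k + 1 : Fin (T+1)).isLt
            have hm2 : 2 ≤ ((k + 1 : Fin (T+1)) : ℕ) := (Nat.two_le_iff _).mpr ⟨hm0, hm1⟩
            have hmT : ((k + 1 : Fin (T+1)) : ℕ) ≤ T := by omega
            have := h ((k + 1 : Fin (T+1)) : ℕ) hm2 hmT
            rw [max_eq_right (le_of_lt h01)] at this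
            exact this
    obtain ⟨j0, hj02, hj0T, hj0max⟩ := hrec
    -- take the max over [2, T]
    obtain ⟨j, hjmem, hjmax⟩ := Finset.exists_max_image (Finset.Icc 2 T)
      (fun k => v k ω) ⟨j0, Finset.mem_Icc.mpr ⟨hj02, hj0T⟩⟩
    rw [Finset.mem_Icc] at hjmem
    have hmax : ∀ k ≤ T, v k ω ≤ v j ω := by
      intro k hk
      rcases Nat.lt_or_ge k 2 with hk2 | hk2
      · have hj0 := hjmax j0 (Finset.mem_Icc.mpr ⟨hj02, hj0T⟩)
        interval_cases k
        · exact le_trans (le_trans (le_max_left _ _) hj0max) hj0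
        · exact le_trans (le_trans (le_max_right _ _) hj0max) hj0
      · exact hjmax k (Finset.mem_Icc.mpr ⟨hk2, hk⟩)
    have hchain := couple_main (fun k => v k ω) (fun k => u k ω)
      (fun k => hvpos k ω) (fun k => (hu k ω).2) T j hjmem.1 hjmem.2 hmax
    show ω ∈ Sset
    rw [hSset, Set.mem_setOf_eq]
    have hsum0 : (∑ i ∈ Finset.Icc 1 (N ω),
        (1 / fwdChain (v 0 ω) (fun k => v k ω) (fun k => u k ω) (T + i)
          - 1 / fwdChainT (v 0 ω) (fun k => v k ω) (fun k => u k ω) (T + i - 1))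
          / (μ {ω' | i ≤ N ω'}).toReal) = 0 := by
      refine Finset.sum_eq_zero fun i hi => ?_
      have hi1 : 1 ≤ i := (Finset.mem_Icc.mp hi).1
      have heq : fwdChain (v 0 ω) (fun k => v k ω) (fun k => u k ω) (T + i)
          = fwdChainT (v 0 ω) (fun k => v k ω) (fun k => u k ω) (T + i - 1) :=
        hchain i hi1
      rw [heq, sub_self, zero_div]
    rw [hsum0, add_zero]
    have hW : 0 < fwdChain (v 0 ω) (fun k => v k ω) (fun k => u k ω) T :=
      fwdChain_pos _ _ _ (hvpos 0 ω) (fun k => hvpos k ω) T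
    exact one_div_pos.mpr hW
  -- put everything together
  have hUmeas : MeasurableSet (H0 0 ∪ H1 1) := (hH0meas 0).union (hH1meas 1)
  set cinv : ℝ≥0∞ := (((T:ℕ)+1 : ℕ) : ℝ≥0∞)⁻¹ with hcinv
  have hfinal : (1 : ℝ≥0∞) - (cinv + cinv) ≤ μ Sset := by
    calc (1 : ℝ≥0∞) - (cinv + cinv)
        ≤ 1 - μ (H0 0 ∪ H1 1) := by
          refine tsub_le_tsub_left ?_ 1
          refine le_trans (measure_union_le _ _) ?_
          rw [hH0val 0, hH1val 1]
          exact add_le_add hPA0 hPA1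
      _ = μ ((H0 0 ∪ H1 1)ᶜ) := (prob_compl_eq_one_sub hUmeas).symm
      _ ≤ μ Sset := measure_mono hsub
  have hmono := ENNReal.toReal_mono (measure_ne_top μ Sset) hfinal
  refine le_trans ?_ hmono
  have hcc : cinv + cinv ≤ 1 := by
    have h2 : cinv ≤ (2 : ℝ≥0∞)⁻¹ := by
      rw [hcinv]
      refine ENNReal.inv_le_inv.mpr ?_
      exact_mod_cast (by omega : 2 ≤ T + 1)
    calc cinv + cinv ≤ (2:ℝ≥0∞)⁻¹ + (2:ℝ≥0∞)⁻¹ := add_le_add h2 h2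
      _ = 1 := ENNReal.inv_two_add_inv_two
  have hct : cinv.toReal = (((T:ℝ)+1))⁻¹ := by
    rw [hcinv, ENNReal.toReal_inv, ENNReal.toReal_natCast]
    push_cast
    ring
  rw [ENNReal.toReal_sub_of_le hcc ENNReal.one_ne_top, ENNReal.toReal_one,
    ENNReal.toReal_add (by rw [hcinv]; simp) (by rw [hcinv]; simp), hct]
  have : 2 / ((T:ℝ)+1) = ((T:ℝ)+1)⁻¹ + ((T:ℝ)+1)⁻¹ := by ring
  rw [this]
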